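/- (Elementary symmetric identity combining Lemmas 7.9 and 7.10.) In R = MvPolynomial (Fin k) (ZMod 2), writing e_j(M) for the j-th elementary symmetric polynomial of a multiset M (i.e. Multiset.esymm M j) and + for multiset sum, the following identity holds: e_{2^{k−2}}(B + Γ + Δ) + e_{2^{k−2}}(B + H + E) + e_{2^{k−2}}(E + Γ + Λ) + e_{2^{k−2}}(Λ + H + Δ) = ∏_{b∈B} (b + y + z)². (Each of the four multisets B+Γ+Δ, B+H+E, E+Γ+Λ, Λ+H+Δ has cardinality 3·2^{k−3}.) -/
import Mathlib

set_option maxHeartbeats 1000000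

open MvPolynomial

namespace FourFPAux
open Polynomial Finset
section
variable {ι R : Type*} [DecidableEq ι] [CommRing R]

noncomputable def Odm (f : ι → R) (s : Finset ι) : Multiset R :=
  ((s.powerset.filter fun T => Odd T.card).val.map fun T => ∑ i ∈ T, f i)
noncomputable def Evm (f : ι → R) (s : Finset ι) : Multiset R :=
  ((s.powerset.filter fun T => Even T.card).val.map fun T => ∑ i ∈ T, f i)
noncomputable def Pe (f : ι → R) (s : Finset ι) : Polynomial R :=
  ((Evm f s).map fun w => Polynomial.X + Polynomial.C w).prod
noncomputable def Po (f : ι → R) (s : Finset ι) : Polynomial R :=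
  ((Odm f s).map fun w => Polynomial.X + Polynomial.C w).prod

lemma map_filter_powerset_insert (f : ι → R) (q : ℕ → Prop) [DecidablePred q] {a : ι}
    {s : Finset ι} (ha : a ∉ s) :
    (((insert a s).powerset.filter fun T => q T.card).val.map fun T => ∑ i ∈ T, f i)
      = ((s.powerset.filter fun T => q T.card).val.map fun T => ∑ i ∈ T, f i)
        + ((s.powerset.filter fun T => q (T.card + 1)).val.map fun T => f a + ∑ i ∈ T, f i) := by
  rw [Finset.powerset_insert, Finset.filter_union, Finset.filter_image]
  have hdisj : Disjoint (s.powerset.filter fun T => q T.card)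
      (((s.powerset.filter fun T => q (insert a T).card)).image (insert a)) := by
    rw [Finset.disjoint_left]
    intro T hT hT'
    simp only [Finset.mem_filter, Finset.mem_powerset, Finset.mem_image] at hT hT'
    obtain ⟨T', _, rfl⟩ := hT'
    exact ha (hT.1 (Finset.mem_insert_self a T'))
  rw [← Finset.disjUnion_eq_union _ _ hdisj]
  have hval : (Finset.disjUnion _ _ hdisj).val
      = (s.powerset.filter fun T => q T.card).val
        + (((s.powerset.filter fun T => q (insert a T).card)).image (insert a)).val := rfl
  rw [hval, Multiset.map_add]
  congr 1
  have hfc : (s.powerset.filter fun T => q (insert a T).card)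
      = s.powerset.filter fun T => q (T.card + 1) := by
    apply Finset.filter_congr
    intro T hT
    rw [Finset.mem_powerset] at hT
    rw [Finset.card_insert_of_notMem (fun h => ha (hT h))]
  rw [hfc]
  have hinj : Set.InjOn (insert a) (↑(s.powerset.filter fun T => q (T.card + 1)) : Set (Finset ι)) := by
    intro T hT T' hT' h
    simp only [Finset.coe_filter, Set.mem_setOf_eq, Finset.mem_powerset] at hT hT'
    have haT : a ∉ T := fun hh => ha (hT.1 hh)
    have haT' : a ∉ T' := fun hh => ha (hT'.1 hh)
    rw [← Finset.erase_insert haT, ← Finset.erase_insert haT', h]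
  rw [Finset.image_val_of_injOn hinj, Multiset.map_map]
  apply Multiset.map_congr rfl
  intro T hT
  simp only [Finset.mem_filter, Finset.mem_powerset, Finset.mem_val] at hT
  exact Finset.sum_insert (fun h => ha (hT.1 h))

lemma Evm_insert (f : ι → R) {a : ι} {s : Finset ι} (ha : a ∉ s) :
    Evm f (insert a s) = Evm f s + (Odm f s).map fun w => f a + w := by
  rw [Evm, map_filter_powerset_insert f _ ha]
  have h1 : ((s.powerset.filter fun T => Even (T.card + 1)).val.map fun T => f a + ∑ i ∈ T, f i)
      = (Odm f s).map fun w => f a + w := by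
    rw [Odm, Multiset.map_map]
    simp only [Nat.even_add_one, Nat.not_even_iff_odd]
    rfl
  rw [h1]
  rfl

lemma Odm_insert (f : ι → R) {a : ι} {s : Finset ι} (ha : a ∉ s) :
    Odm f (insert a s) = Odm f s + (Evm f s).map fun w => f a + w := by
  rw [Odm, map_filter_powerset_insert f _ ha]
  have h1 : ((s.powerset.filter fun T => Odd (T.card + 1)).val.map fun T => f a + ∑ i ∈ T, f i)
      = (Evm f s).map fun w => f a + w := by
    rw [Evm, Multiset.map_map]
    simp only [Nat.odd_add_one, Nat.not_odd_iff_even]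
    rfl
  rw [h1]
  rfl

lemma prod_map_comp (M : Multiset R) (c : R) :
    (M.map fun w => Polynomial.X + Polynomial.C (c + w)).prod
      = ((M.map fun w => Polynomial.X + Polynomial.C w).prod).comp
          (Polynomial.X + Polynomial.C c) := by
  have h0 : ((M.map fun w => Polynomial.X + Polynomial.C w).prod).comp
          (Polynomial.X + Polynomial.C c)
      = (Polynomial.eval₂RingHom Polynomial.C (Polynomial.X + Polynomial.C c))
          ((M.map fun w => Polynomial.X + Polynomial.C w).prod) := rfl
  rw [h0, map_multiset_prod, Multiset.map_map]
  apply congrArg Multiset.prod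
  apply Multiset.map_congr rfl
  intro w _
  simp only [Function.comp_apply, coe_eval₂RingHom, Polynomial.eval₂_add, Polynomial.eval₂_X,
    Polynomial.eval₂_C, Polynomial.C_add]
  ring
lemma Pe_insert (f : ι → R) {a : ι} {s : Finset ι} (ha : a ∉ s) :
    Pe f (insert a s) = Pe f s * (Po f s).comp (Polynomial.X + Polynomial.C (f a)) := by
  rw [Pe, Evm_insert f ha, Multiset.map_add, Multiset.prod_add, Multiset.map_map, Po,
    ← prod_map_comp]
  rfl

lemma Po_insert (f : ι → R) {a : ι} {s : Finset ι} (ha : a ∉ s) :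
    Po f (insert a s) = Po f s * (Pe f s).comp (Polynomial.X + Polynomial.C (f a)) := by
  rw [Po, Odm_insert f ha, Multiset.map_add, Multiset.prod_add, Multiset.map_map, Pe,
    ← prod_map_comp]
  rfl

lemma comp_shift_shift (p : Polynomial R) (u v : R) :
    (p.comp (Polynomial.X + Polynomial.C u)).comp (Polynomial.X + Polynomial.C v)
      = p.comp (Polynomial.X + Polynomial.C (u + v)) := by
  rw [Polynomial.comp_assoc, Polynomial.add_comp, Polynomial.X_comp, Polynomial.C_comp,
    add_assoc, ← map_add, add_comm v u]

lemma Pe_monic (f : ι → R) (s : Finset ι) : (Pe f s).Monic :=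
  monic_multiset_prod_of_monic _ _ fun w _ => monic_X_add_C w

lemma Pe_natDegree (f : ι → R) (s : Finset ι) [Nontrivial R] :
    (Pe f s).natDegree = Multiset.card (Evm f s) := by
  rw [Pe, natDegree_multiset_prod_of_monic]
  · simp [Multiset.map_map, Polynomial.natDegree_X_add_C, Function.comp]
  · intro p hp
    obtain ⟨w, _, rfl⟩ := Multiset.mem_map.mp hp
    exact monic_X_add_C w

lemma invariant (h2 : (2 : R) = 0) (f : ι → R) {s : Finset ι} (hs : s.Nonempty) :
    (Multiset.card (Evm f s) = 2 ^ (s.card - 1)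
      ∧ Multiset.card (Odm f s) = 2 ^ (s.card - 1))
    ∧ (∀ u : R, (Pe f s).comp (Polynomial.X + Polynomial.C u)
        = Pe f s + Polynomial.C ((Pe f s).eval u))
    ∧ (∀ a ∈ s, Po f s = (Pe f s).comp (Polynomial.X + Polynomial.C (f a))) := by
  have h2' : (2 : Polynomial R) = 0 := by
    rw [← map_ofNat (Polynomial.C (R := R)) 2, h2, map_zero]
  induction hs using Finset.Nonempty.cons_induction with
  | singleton a =>
    have hOe : Odm f (∅ : Finset ι) = 0 := by
      simp [Odm, Finset.powerset_empty, Finset.filter_singleton]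
    have hEe : Evm f (∅ : Finset ι) = {(0 : R)} := by
      simp [Evm, Finset.powerset_empty, Finset.filter_singleton]
    have hE : Evm f ({a} : Finset ι) = {(0 : R)} := by
      rw [show ({a} : Finset ι) = insert a ∅ from rfl, Evm_insert f (notMem_empty a), hOe, hEe]
      simp
    have hO : Odm f ({a} : Finset ι) = {f a} := by
      rw [show ({a} : Finset ι) = insert a ∅ from rfl, Odm_insert f (notMem_empty a), hOe, hEe]
      simp
    have hPe : Pe f ({a} : Finset ι) = Polynomial.X := by
      rw [Pe, hE]; simp
    have hPo : Po f ({a} : Finset ι) = Polynomial.X + Polynomial.C (f a) := by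
      rw [Po, hO]; simp
    refine ⟨⟨by simp [hE], by simp [hO]⟩, ?_, ?_⟩
    · intro u; rw [hPe]; simp
    · intro b hb
      rw [Finset.mem_singleton] at hb
      subst hb
      rw [hPe, hPo]; simp
  | cons a s ha hs ih =>
    obtain ⟨⟨hcE, hcO⟩, hadd, hPo⟩ := ih
    obtain ⟨a₀, ha₀⟩ := hs
    have hpos : 0 < s.card := Finset.card_pos.mpr ⟨a₀, ha₀⟩
    have hπ : Po f s = Pe f s + Polynomial.C ((Pe f s).eval (f a₀)) := by
      rw [hPo a₀ ha₀, hadd]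
    have heq : Pe f (insert a s)
        = Pe f s * (Pe f s + Polynomial.C ((Pe f s).eval (f a) + (Pe f s).eval (f a₀))) := by
      rw [Pe_insert f ha, hπ, Polynomial.add_comp, Polynomial.C_comp, hadd, map_add]
      ring
    rw [Finset.cons_eq_insert]
    refine ⟨⟨?_, ?_⟩, ?_, ?_⟩
    · rw [Evm_insert f ha, Multiset.card_add, Multiset.card_map, hcE, hcO,
        Finset.card_insert_of_notMem ha]
      have h1 : s.card + 1 - 1 = (s.card - 1) + 1 := by omega
      rw [h1, pow_succ, mul_two]
    · rw [Odm_insert f ha, Multiset.card_add, Multiset.card_map, hcE, hcO,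
        Finset.card_insert_of_notMem ha]
      have h1 : s.card + 1 - 1 = (s.card - 1) + 1 := by omega
      rw [h1, pow_succ, mul_two]
    · intro u
      rw [heq, Polynomial.mul_comp, Polynomial.add_comp, Polynomial.C_comp, hadd u]
      simp only [Polynomial.eval_mul, Polynomial.eval_add, Polynomial.eval_C, map_add, map_mul]
      linear_combination (Pe f s * Polynomial.C ((Pe f s).eval u)) * h2'
    · intro b hb
      rw [Finset.mem_insert] at hb
      have hPoI := Po_insert f ha
      rcases hb with rfl | hb
      · rw [hPoI, Pe_insert f ha, Polynomial.mul_comp, comp_shift_shift]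
        have hbb : f b + f b = 0 := by linear_combination (f b) * h2
        rw [hbb, map_zero, add_zero, Polynomial.comp_X, mul_comm]
      · rw [hPoI, Pe_insert f ha, Polynomial.mul_comp, comp_shift_shift, hPo b hb,
          comp_shift_shift]
        have hbb : f b + (f a + f b) = f a := by linear_combination (f b) * h2
        rw [hbb]
lemma keyid {S : Type*} [CommRing S] (h2 : (2 : S) = 0) (A a b c : S) :
    (A+a)*(A+b)*(A+c) + (A+a)*(A+(c+a))*(A+(b+a)) + (A+(b+a))*(A+b)*(A+(b+c))
      + (A+(b+c))*(A+(c+a))*(A+c)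
    = (a+b+c)^2*A + (a+b+c)^3 := by
  linear_combination (-(b*c^2) - b^2*c - a*c^2 - a*b*c - a*b^2 - a^2*c - a^2*b + A*c^2
    + 2*A*b*c + A*b^2 + 2*A*a*c + 2*A*a*b + A*a^2 + 3*A^2*c + 3*A^2*b + 3*A^2*a + 2*A^3) * h2
end
end FourFPAux

open FourFPAux

theorem four_fixed_points_esymm_identity (k : ℕ) (hk : 3 ≤ k)
    (y z : MvPolynomial (Fin k) (ZMod 2))
    (hy : y = X ⟨k - 2, by omega⟩) (hz : z = X ⟨k - 1, by omega⟩)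
    (B Γm Δm Em Hm Λm : Multiset (MvPolynomial (Fin k) (ZMod 2)))
    (hB : B = (Finset.univ.filter
        (fun S : Finset (Fin k) => Odd S.card ∧ ∀ i ∈ S, (i : ℕ) < k - 2)).val.map
        (fun S => ∑ i ∈ S, X i))
    (hΓ : Γm = B.map (fun b => y + X ⟨0, by omega⟩ + b))
    (hΔ : Δm = B.map (fun b => z + X ⟨0, by omega⟩ + b))
    (hE : Em = B.map (fun b => y + b))
    (hH : Hm = B.map (fun b => z + b))
    (hΛ : Λm = B.map (fun b => y + z + X ⟨0, by omega⟩ + b))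
    :
    Multiset.esymm (B + Γm + Δm) (2 ^ (k - 2)) + Multiset.esymm (B + Hm + Em) (2 ^ (k - 2))
      + Multiset.esymm (Em + Γm + Λm) (2 ^ (k - 2))
      + Multiset.esymm (Λm + Hm + Δm) (2 ^ (k - 2))
      = ((B.map (fun b => b + y + z)).prod) ^ 2 := by
  classical
  have h2 : (2 : MvPolynomial (Fin k) (ZMod 2)) = 0 := by
    have := CharP.cast_eq_zero (MvPolynomial (Fin k) (ZMod 2)) 2
    simpa using this
  -- the ground finset
  set s0 : Finset (Fin k) := Finset.univ.filter (fun i => (i : ℕ) < k - 2) with hs0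
  have hs0card : s0.card = k - 2 := by
    have hmap : s0 = Finset.map (Fin.castLEEmb (show k - 2 ≤ k by omega)) Finset.univ := by
      ext i
      simp only [hs0, Finset.mem_filter, Finset.mem_univ, true_and, Finset.mem_map,
        Fin.castLEEmb_apply]
      constructor
      · intro hi
        exact ⟨⟨(i : ℕ), hi⟩, by ext; rfl⟩
      · rintro ⟨j, rfl⟩
        exact j.isLt
    rw [hmap, Finset.card_map, Finset.card_univ, Fintype.card_fin]
  set i0 : Fin k := ⟨0, by omega⟩ with hi0def
  have hi0 : i0 ∈ s0 := by
    simp only [hs0, Finset.mem_filter, Finset.mem_univ, true_and]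
    show (0 : ℕ) < k - 2
    omega
  have hs0ne : s0.Nonempty := ⟨i0, hi0⟩
  have hBO : B = Odm X s0 := by
    rw [hB, Odm]
    have hfs : (Finset.univ.filter
        (fun S : Finset (Fin k) => Odd S.card ∧ ∀ i ∈ S, (i : ℕ) < k - 2))
        = s0.powerset.filter (fun T => Odd T.card) := by
      ext S
      simp only [Finset.mem_filter, Finset.mem_univ, true_and, Finset.mem_powerset,
        Finset.subset_iff, hs0]
      tauto
    rw [hfs]
  obtain ⟨⟨hcE, hcO⟩, hadd, hPoPe⟩ := invariant h2 X hs0ne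
  set P := Pe (MvPolynomial.X (σ := Fin k) (R := ZMod 2)) s0 with hP
  set π := P.eval (X i0) with hπ
  set β := P.eval y with hβ
  set γ := P.eval z with hγ
  have hLadd : ∀ u v : MvPolynomial (Fin k) (ZMod 2), P.eval (u + v) = P.eval u + P.eval v := by
    intro u v
    have h := congrArg (Polynomial.eval u) (hadd v)
    rw [Polynomial.eval_comp] at h
    simpa [add_comm] using h
  have hππ : π + π = 0 := by linear_combination π * h2
  have hPo_eq : Po X s0 = P + Polynomial.C π := by
    rw [hPoPe i0 hi0, hadd]
  have hprodB : (B.map fun b => Polynomial.X + Polynomial.C b).prod = P + Polynomial.C π := by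
    rw [hBO]; exact hPo_eq
  have hshift : ∀ c : MvPolynomial (Fin k) (ZMod 2),
      (B.map fun b => Polynomial.X + Polynomial.C (c + b)).prod
        = P + Polynomial.C (P.eval c + π) := by
    intro c
    rw [prod_map_comp, hprodB, Polynomial.add_comp, Polynomial.C_comp, hadd c, map_add, add_assoc]
  -- the six products
  have hprodΓ : (Γm.map fun m => Polynomial.X + Polynomial.C m).prod = P + Polynomial.C β := by
    rw [hΓ, Multiset.map_map]
    have h1 := hshift (y + X i0)
    have h2' : P.eval (y + X i0) + π = β := by
      rw [hLadd, add_assoc, hππ, add_zero]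
    rw [h2'] at h1
    exact h1
  have hprodΔ : (Δm.map fun m => Polynomial.X + Polynomial.C m).prod = P + Polynomial.C γ := by
    rw [hΔ, Multiset.map_map]
    have h1 := hshift (z + X i0)
    have h2' : P.eval (z + X i0) + π = γ := by
      rw [hLadd, add_assoc, hππ, add_zero]
    rw [h2'] at h1
    exact h1
  have hprodE : (Em.map fun m => Polynomial.X + Polynomial.C m).prod
      = P + Polynomial.C (β + π) := by
    rw [hE, Multiset.map_map]
    exact hshift y
  have hprodH : (Hm.map fun m => Polynomial.X + Polynomial.C m).prod
      = P + Polynomial.C (γ + π) := by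
    rw [hH, Multiset.map_map]
    exact hshift z
  have hprodΛ : (Λm.map fun m => Polynomial.X + Polynomial.C m).prod
      = P + Polynomial.C (β + γ) := by
    rw [hΛ, Multiset.map_map]
    have h1 := hshift (y + z + X i0)
    have h2' : P.eval (y + z + X i0) + π = β + γ := by
      rw [hLadd, hLadd, add_assoc, add_assoc, hππ, add_zero]
    rw [h2'] at h1
    exact h1
  -- cardinalities
  have hcardB : Multiset.card B = 2 ^ (k - 3) := by
    rw [hBO, hcO, hs0card]
    congr 1
  set n := 2 ^ (k - 3) with hn
  have hnpos : 0 < n := by positivity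
  have hdeg : P.natDegree = n := by
    rw [hP, Pe_natDegree X s0, hcE, hs0card, hn]
    congr 1
  have hcoeffP : P.coeff n = 1 := by
    rw [← hdeg]
    exact (Pe_monic X s0).coeff_natDegree
  have hconv : ∀ M1 M2 M3 : Multiset (MvPolynomial (Fin k) (ZMod 2)),
      Multiset.card M1 = n → Multiset.card M2 = n → Multiset.card M3 = n →
      Multiset.esymm (M1 + M2 + M3) (2 ^ (k - 2))
        = (((M1 + M2 + M3).map fun r => Polynomial.X + Polynomial.C r).prod).coeff n := by
    intro M1 M2 M3 hm1 hm2 hm3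
    have hcard : Multiset.card (M1 + M2 + M3) = 3 * n := by
      simp only [Multiset.card_add, hm1, hm2, hm3]
      omega
    have hle : n ≤ Multiset.card (M1 + M2 + M3) := by omega
    rw [Multiset.prod_X_add_C_coeff _ hle, hcard]
    congr 1
    have hpow : 2 ^ (k - 2) = 2 * n := by
      rw [hn, show k - 2 = (k - 3) + 1 by omega, pow_succ]
      ring
    omega
  have hcmΓ : Multiset.card Γm = n := by rw [hΓ, Multiset.card_map, hcardB]
  have hcmΔ : Multiset.card Δm = n := by rw [hΔ, Multiset.card_map, hcardB]
  have hcmE : Multiset.card Em = n := by rw [hE, Multiset.card_map, hcardB]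
  have hcmH : Multiset.card Hm = n := by rw [hH, Multiset.card_map, hcardB]
  have hcmΛ : Multiset.card Λm = n := by rw [hΛ, Multiset.card_map, hcardB]
  rw [hconv B Γm Δm hcardB hcmΓ hcmΔ, hconv B Hm Em hcardB hcmH hcmE,
    hconv Em Γm Λm hcmE hcmΓ hcmΛ, hconv Λm Hm Δm hcmΛ hcmH hcmΔ]
  simp only [Multiset.map_add, Multiset.prod_add]
  rw [hprodB, hprodΓ, hprodΔ, hprodE, hprodH, hprodΛ]
  rw [← Polynomial.coeff_add, ← Polynomial.coeff_add, ← Polynomial.coeff_add]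
  have h2' : (2 : Polynomial (MvPolynomial (Fin k) (ZMod 2))) = 0 := by
    rw [← map_ofNat (Polynomial.C (R := MvPolynomial (Fin k) (ZMod 2))) 2, h2, map_zero]
  have hkey := keyid h2' P (Polynomial.C π) (Polynomial.C β) (Polynomial.C γ)
  simp only [← map_add] at hkey
  rw [hkey]
  have hRHS : (B.map fun b => b + y + z).prod = β + γ + π := by
    have h1 : (B.map fun b => b + y + z).prod
        = Polynomial.eval (y + z) ((B.map fun b => Polynomial.X + Polynomial.C b).prod) := by
      rw [← Polynomial.coe_evalRingHom, map_multiset_prod, Multiset.map_map]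
      apply congrArg Multiset.prod
      apply Multiset.map_congr rfl
      intro b _
      simp only [Function.comp_apply, Polynomial.coe_evalRingHom, Polynomial.eval_add,
        Polynomial.eval_X, Polynomial.eval_C]
      ring
    rw [h1, hprodB, Polynomial.eval_add, Polynomial.eval_C, hLadd]
  rw [hRHS, ← map_pow, ← map_pow, Polynomial.coeff_add, Polynomial.coeff_C_mul, hcoeffP,
    mul_one, Polynomial.coeff_C, if_neg (by omega : ¬ n = 0), add_zero]
  ring
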